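/- arXiv:1312.3257 — 2 statements merged into one kernel-verified Lean document; each statement's English description precedes it below -/
import Mathlib

section
/- There exists an absolute constant C > 0 such that for every τ > 0, all a, b ∈ ℝ³, and every v ∈ ℝ³ with |v| ≤ 1, one has |V_τ(a) v − V_τ(b) v| ≤ C τ |a − b|. -/
noncomputable section
open scoped BigOperators

/-- Euclidean norm on ℝ³. -/
def enorm3 (v : Fin 3 → ℝ) : ℝ := Real.sqrt (∑ i, v i ^ 2)

/-- Squared Euclidean norm on ℝ³. -/
def sq3 (v : Fin 3 → ℝ) : ℝ := ∑ i, v i ^ 2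

/-- The propagation matrix `V_τ(w)` of the angular momentum method, applied to
a vector `v`:
`V_τ(w) = (1 + (τ²/4)|w|²)⁻¹ [ (1 − (τ²/4)|w|²) I + (τ²/2)(w ⊗ w) + τ Q(w) ]`,
where `Q(w)v = v × w` and `(w ⊗ w)v = (w·v) w`. -/
def Vmat (τ : ℝ) (w v : Fin 3 → ℝ) : Fin 3 → ℝ :=
  (1 + τ ^ 2 / 4 * sq3 w)⁻¹ •
    ((1 - τ ^ 2 / 4 * sq3 w) • v + (τ ^ 2 / 2 * ∑ i, w i * v i) • w
      + τ • crossProduct v w)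

lemma sq3_nonneg (v : Fin 3 → ℝ) : 0 ≤ sq3 v := by unfold sq3; positivity

lemma sq3_expand (v : Fin 3 → ℝ) : sq3 v = v 0 ^ 2 + v 1 ^ 2 + v 2 ^ 2 := by
  simp [sq3, Fin.sum_univ_three]

lemma den_pos (τ : ℝ) (w : Fin 3 → ℝ) : 0 < 1 + τ ^ 2 / 4 * sq3 w := by
  have := sq3_nonneg w; positivity

lemma cross0 (x y : Fin 3 → ℝ) : crossProduct x y 0 = x 1 * y 2 - x 2 * y 1 := by
  simp [cross_apply]
lemma cross1 (x y : Fin 3 → ℝ) : crossProduct x y 1 = x 2 * y 0 - x 0 * y 2 := by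
  simp [cross_apply]
lemma cross2 (x y : Fin 3 → ℝ) : crossProduct x y 2 = x 0 * y 1 - x 1 * y 0 := by
  simp [cross_apply]

lemma Vmat_apply (τ : ℝ) (w v : Fin 3 → ℝ) (i : Fin 3) :
    Vmat τ w v i = (1 + τ ^ 2 / 4 * sq3 w)⁻¹ *
      ((1 - τ ^ 2 / 4 * sq3 w) * v i + (τ ^ 2 / 2 * (w 0 * v 0 + w 1 * v 1 + w 2 * v 2)) * w i
        + τ * (crossProduct v w) i) := by
  simp [Vmat, Fin.sum_univ_three]

/-- Cayley identity, component 0. -/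
lemma cayley0 (τ : ℝ) (w v : Fin 3 → ℝ) :
    Vmat τ w v 0 - τ/2 * (Vmat τ w v 1 * w 2 - Vmat τ w v 2 * w 1)
      = v 0 + τ/2 * (v 1 * w 2 - v 2 * w 1) := by
  have h := (den_pos τ w).ne'
  rw [sq3_expand] at h
  simp only [Vmat_apply, cross0, cross1, cross2, sq3_expand]
  field_simp
  ring

lemma cayley1 (τ : ℝ) (w v : Fin 3 → ℝ) :
    Vmat τ w v 1 - τ/2 * (Vmat τ w v 2 * w 0 - Vmat τ w v 0 * w 2)
      = v 1 + τ/2 * (v 2 * w 0 - v 0 * w 2) := by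
  have h := (den_pos τ w).ne'
  rw [sq3_expand] at h
  simp only [Vmat_apply, cross0, cross1, cross2, sq3_expand]
  field_simp
  ring

lemma cayley2 (τ : ℝ) (w v : Fin 3 → ℝ) :
    Vmat τ w v 2 - τ/2 * (Vmat τ w v 0 * w 1 - Vmat τ w v 1 * w 0)
      = v 2 + τ/2 * (v 0 * w 1 - v 1 * w 0) := by
  have h := (den_pos τ w).ne'
  rw [sq3_expand] at h
  simp only [Vmat_apply, cross0, cross1, cross2, sq3_expand]
  field_simp
  ring

/-- Orthogonality: `|V_τ(w)v| = |v|`. -/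
lemma sq3_Vmat (τ : ℝ) (w v : Fin 3 → ℝ) : sq3 (Vmat τ w v) = sq3 v := by
  have h := (den_pos τ w).ne'
  rw [sq3_expand] at h
  simp only [sq3_expand, Vmat_apply, cross0, cross1, cross2]
  field_simp
  ring

/-- Lagrange: `|x × y|² ≤ |x|²|y|²`. -/
lemma sq3_cross_le (x y : Fin 3 → ℝ) :
    sq3 (crossProduct x y) ≤ sq3 x * sq3 y := by
  have h : sq3 (crossProduct x y)
      = sq3 x * sq3 y - (x 0 * y 0 + x 1 * y 1 + x 2 * y 2) ^ 2 := by
    simp only [sq3_expand, cross0, cross1, cross2]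
    ring
  nlinarith [sq_nonneg (x 0 * y 0 + x 1 * y 1 + x 2 * y 2)]

/-- There is an absolute constant `C > 0` such that for all
`τ > 0`, `a, b ∈ ℝ³`, and `|v| ≤ 1`, `|V_τ(a)v − V_τ(b)v| ≤ C τ |a − b|`. -/
theorem Vmat_lipschitz_in_w :
    ∃ C > (0 : ℝ), ∀ τ : ℝ, 0 < τ → ∀ a b v : Fin 3 → ℝ, enorm3 v ≤ 1 →
      enorm3 (Vmat τ a v - Vmat τ b v) ≤ C * τ * enorm3 (a - b) := by
  refine ⟨1, one_pos, fun τ hτ a b v hv => ?_⟩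
  set ua := Vmat τ a v with hua
  set ub := Vmat τ b v with hub
  set d : Fin 3 → ℝ := ua - ub with hd
  -- sq3 v ≤ 1
  have hsqv : sq3 v ≤ 1 := by
    have h1 : enorm3 v = Real.sqrt (sq3 v) := rfl
    have h2 := Real.sqrt_nonneg (sq3 v)
    nlinarith [Real.sq_sqrt (sq3_nonneg v), hv]
  -- sq3 ub = sq3 v
  have hub_sq : sq3 ub = sq3 v := sq3_Vmat τ b v
  -- difference identity: d - (τ/2) d × a = (τ/2) (v + ub) × (a - b)
  have key : ∀ i : Fin 3,
      d i - τ/2 * (crossProduct d a) i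
        = τ/2 * (crossProduct (v + ub) (a - b)) i := by
    have ca0 := cayley0 τ a v; have ca1 := cayley1 τ a v; have ca2 := cayley2 τ a v
    have cb0 := cayley0 τ b v; have cb1 := cayley1 τ b v; have cb2 := cayley2 τ b v
    rw [← hua] at ca0 ca1 ca2
    rw [← hub] at cb0 cb1 cb2
    intro i
    fin_cases i
    · show d 0 - τ/2 * (crossProduct d a) 0 = τ/2 * (crossProduct (v + ub) (a - b)) 0
      simp only [cross0, hd, Pi.sub_apply, Pi.add_apply]
      linarith [ca0, cb0]
    · show d 1 - τ/2 * (crossProduct d a) 1 = τ/2 * (crossProduct (v + ub) (a - b)) 1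
      simp only [cross1, hd, Pi.sub_apply, Pi.add_apply]
      linarith [ca1, cb1]
    · show d 2 - τ/2 * (crossProduct d a) 2 = τ/2 * (crossProduct (v + ub) (a - b)) 2
      simp only [cross2, hd, Pi.sub_apply, Pi.add_apply]
      linarith [ca2, cb2]
  -- sq3 d ≤ sq3 (d - (τ/2) d×a)  (orthogonality of d and d×a)
  have horth : sq3 d ≤ (∑ i, (d i - τ/2 * (crossProduct d a) i) ^ 2) := by
    have : (∑ i, (d i - τ/2 * (crossProduct d a) i) ^ 2)
        = sq3 d + (τ/2)^2 * sq3 (crossProduct d a) := by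
      simp only [Fin.sum_univ_three, sq3_expand, cross0, cross1, cross2]
      ring
    rw [this]
    nlinarith [sq3_nonneg (crossProduct d a), sq_nonneg (τ/2)]
  -- rewrite RHS via key identity
  have hsum : (∑ i, (d i - τ/2 * (crossProduct d a) i) ^ 2)
      = (τ/2)^2 * sq3 (crossProduct (v + ub) (a - b)) := by
    simp only [Fin.sum_univ_three, key, sq3_expand]
    ring
  -- bound the cross term
  have hcross := sq3_cross_le (v + ub) (a - b)
  have hvub : sq3 (v + ub) ≤ 4 := by
    have e : sq3 (v + ub) = sq3 v + sq3 ub + 2 * (v 0 * ub 0 + v 1 * ub 1 + v 2 * ub 2) := by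
      simp only [sq3_expand, Pi.add_apply]; ring
    nlinarith [sq_nonneg (v 0 - ub 0), sq_nonneg (v 1 - ub 1), sq_nonneg (v 2 - ub 2),
      sq3_expand v, sq3_expand ub, sq3_expand (v + ub)]
  -- final squared bound
  have hfinal : sq3 d ≤ τ^2 * sq3 (a - b) := by
    have h1 : sq3 d ≤ (τ/2)^2 * sq3 (crossProduct (v + ub) (a - b)) := by
      rw [← hsum]; exact horth
    have h2 : sq3 (crossProduct (v + ub) (a - b)) ≤ 4 * sq3 (a - b) := by
      nlinarith [sq3_nonneg (a - b)]
    nlinarith [sq_nonneg τ, sq3_nonneg (crossProduct (v + ub) (a - b))]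
  -- take square roots
  have e1 : enorm3 d = Real.sqrt (sq3 d) := rfl
  have e2 : enorm3 (a - b) = Real.sqrt (sq3 (a - b)) := rfl
  rw [e1, e2, one_mul]
  calc Real.sqrt (sq3 d) ≤ Real.sqrt (τ^2 * sq3 (a - b)) := Real.sqrt_le_sqrt hfinal
    _ = τ * Real.sqrt (sq3 (a - b)) := by
        rw [Real.sqrt_mul (sq_nonneg τ), Real.sqrt_sq hτ.le]
end
end

section
/- There exists a constant C > 0 with the following property. For every M ≥ 1 with h = 1/M, every Δt > 0, every grid function d : (ℤ/Mℤ)³ → ℝ³ with |d_i| = 1 for all i, and all grid functions w, w₁, w₂ : (ℤ/Mℤ)³ → ℝ³, one has ‖∇_h (V_{Δt}((w + w₁)/2) d) − ∇_h (V_{Δt}((w + w₂)/2) d)‖ ≤ (C Δt / h) ‖w₁ − w₂‖, where V_{Δt}((w + w_j)/2) d denotes the grid function i ↦ V_{Δt}((w_i + (w_j)_i)/2) d_i and the norms are discrete L² norms. -/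
noncomputable section
open scoped BigOperators

/-- Backward difference `D⁻_j` of a periodic grid function on `(ℤ/Mℤ)³`. -/
def Dm {M : ℕ} (h : ℝ) (u : (Fin 3 → ZMod M) → Fin 3 → ℝ) (j : Fin 3)
    (i : Fin 3 → ZMod M) : Fin 3 → ℝ :=
  h⁻¹ • (u i - u (i - Pi.single j 1))

/-- Discrete L² norm: `‖u‖ = (h³ Σ_i |u(i)|²)^(1/2)`. -/
def l2norm {M : ℕ} [NeZero M] (h : ℝ) (u : (Fin 3 → ZMod M) → Fin 3 → ℝ) : ℝ :=
  Real.sqrt (h ^ 3 * ∑ i, ∑ k, u i k ^ 2)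

/-- Discrete L² norm of the backward gradient:
`‖∇_h u‖ = (h³ Σ_i Σ_j |D⁻_j u(i)|²)^(1/2)`. -/
def gradnorm {M : ℕ} [NeZero M] (h : ℝ) (u : (Fin 3 → ZMod M) → Fin 3 → ℝ) : ℝ :=
  Real.sqrt (h ^ 3 * ∑ i, ∑ j, ∑ k, Dm h u j i k ^ 2)

lemma enorm3_nonneg (v : Fin 3 → ℝ) : 0 ≤ enorm3 v := Real.sqrt_nonneg _
lemma enorm3_eq (v : Fin 3 → ℝ) : enorm3 v = Real.sqrt (sq3 v) := rfl
lemma sq_enorm3 (v : Fin 3 → ℝ) : enorm3 v ^ 2 = sq3 v := Real.sq_sqrt (sq3_nonneg v)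
lemma cs3 (v w : Fin 3 → ℝ) : |∑ i, v i * w i| ≤ enorm3 v * enorm3 w := by
  have h2 : (∑ i, v i * w i) ^ 2 ≤ sq3 v * sq3 w := by
    simp only [sq3, Fin.sum_univ_three]
    nlinarith [sq_nonneg (v 0 * w 1 - v 1 * w 0), sq_nonneg (v 0 * w 2 - v 2 * w 0),
      sq_nonneg (v 1 * w 2 - v 2 * w 1)]
  calc |∑ i, v i * w i| = Real.sqrt ((∑ i, v i * w i) ^ 2) := (Real.sqrt_sq_eq_abs _).symm
    _ ≤ Real.sqrt (sq3 v * sq3 w) := Real.sqrt_le_sqrt h2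
    _ = enorm3 v * enorm3 w := by rw [Real.sqrt_mul (sq3_nonneg v)]; rfl
lemma sq3_add (v w : Fin 3 → ℝ) :
    sq3 (v + w) = sq3 v + 2 * (∑ i, v i * w i) + sq3 w := by
  simp [sq3, Fin.sum_univ_three]; ring
lemma enorm3_add_le (v w : Fin 3 → ℝ) : enorm3 (v + w) ≤ enorm3 v + enorm3 w := by
  have h1 : sq3 (v + w) ≤ (enorm3 v + enorm3 w) ^ 2 := by
    have := cs3 v w
    have h2 := sq_enorm3 v
    have h3 := sq_enorm3 w
    rw [sq3_add]
    nlinarith [abs_le.mp this]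
  calc enorm3 (v + w) = Real.sqrt (sq3 (v + w)) := rfl
    _ ≤ Real.sqrt ((enorm3 v + enorm3 w) ^ 2) := Real.sqrt_le_sqrt h1
    _ = enorm3 v + enorm3 w := Real.sqrt_sq (add_nonneg (enorm3_nonneg v) (enorm3_nonneg w))
lemma enorm3_smul (c : ℝ) (v : Fin 3 → ℝ) : enorm3 (c • v) = |c| * enorm3 v := by
  have : sq3 (c • v) = c ^ 2 * sq3 v := by simp [sq3, Fin.sum_univ_three]; ring
  rw [enorm3_eq, this, Real.sqrt_mul (sq_nonneg c), Real.sqrt_sq_eq_abs]; rfl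
lemma enorm3_sub_comm (v w : Fin 3 → ℝ) : enorm3 (v - w) = enorm3 (w - v) := by
  unfold enorm3; congr 1; simp [Fin.sum_univ_three]; ring
lemma cross_le (v w : Fin 3 → ℝ) :
    enorm3 (crossProduct v w) ≤ enorm3 v * enorm3 w := by
  have h2 : sq3 (crossProduct v w) ≤ sq3 v * sq3 w := by
    simp only [sq3, cross_apply, Fin.sum_univ_three]
    simp only [Matrix.cons_val_zero, Matrix.cons_val_one, Matrix.head_cons,
      Matrix.cons_val_two, Matrix.tail_cons]
    nlinarith [sq_nonneg (v 0 * w 0 + v 1 * w 1 + v 2 * w 2)]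
  calc enorm3 (crossProduct v w) = Real.sqrt (sq3 (crossProduct v w)) := rfl
    _ ≤ Real.sqrt (sq3 v * sq3 w) := Real.sqrt_le_sqrt h2
    _ = enorm3 v * enorm3 w := by rw [Real.sqrt_mul (sq3_nonneg v)]; rfl


lemma enorm3_add3_le (p q s : Fin 3 → ℝ) :
    enorm3 (p + q + s) ≤ enorm3 p + enorm3 q + enorm3 s := by
  have h1 := enorm3_add_le (p + q) s
  have h2 := enorm3_add_le p q
  linarith

lemma enorm3_add4_le (p q s t : Fin 3 → ℝ) :
    enorm3 (p + q + s + t) ≤ enorm3 p + enorm3 q + enorm3 s + enorm3 t := by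
  have h1 := enorm3_add_le (p + q + s) t
  have h2 := enorm3_add3_le p q s
  linarith

set_option maxHeartbeats 1000000 in
lemma Vmat_lip_aux (τ : ℝ) (hτ : 0 ≤ τ) (d a b : Fin 3 → ℝ) (hd : enorm3 d = 1)
    (hba : enorm3 b ≤ enorm3 a) :
    enorm3 (Vmat τ a d - Vmat τ b d) ≤ 9 / 2 * τ * enorm3 (a - b) := by
  set A := enorm3 a with hA
  set B := enorm3 b with hB
  set r := enorm3 (a - b) with hr
  clear_value A B r
  have hA0 : 0 ≤ A := by rw [hA]; exact enorm3_nonneg a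
  have hB0 : 0 ≤ B := by rw [hB]; exact enorm3_nonneg b
  have hr0 : 0 ≤ r := by rw [hr]; exact enorm3_nonneg _
  have hsa : sq3 a = A ^ 2 := by rw [hA, sq_enorm3]
  have hsb : sq3 b = B ^ 2 := by rw [hB, sq_enorm3]
  have hABr : A ≤ B + r := by
    have h0 : b + (a - b) = a := by abel
    calc A = enorm3 (b + (a - b)) := by rw [h0]; exact hA
      _ ≤ B + r := by rw [hB, hr]; exact enorm3_add_le _ _
  have hBAr : B ≤ A + r := by
    have h0 : a + (b - a) = b := by abel
    calc B = enorm3 (a + (b - a)) := by rw [h0]; exact hB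
      _ ≤ A + enorm3 (b - a) := by rw [hA]; exact enorm3_add_le _ _
      _ = A + r := by rw [enorm3_sub_comm, hr]
  set α := 1 + τ ^ 2 / 4 * sq3 a with hαdef
  set β := 1 + τ ^ 2 / 4 * sq3 b with hβdef
  clear_value α β
  have hα1 : 1 ≤ α := by
    rw [hαdef]; nlinarith [sq3_nonneg a, sq_nonneg τ]
  have hβ1 : 1 ≤ β := by
    rw [hβdef]; nlinarith [sq3_nonneg b, sq_nonneg τ]
  have hα0 : (0:ℝ) < α := lt_of_lt_of_le one_pos hα1
  have hβ0 : (0:ℝ) < β := lt_of_lt_of_le one_pos hβ1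
  have hdot1 : |∑ i, (a - b) i * d i| ≤ r := by
    have h0 := cs3 (a - b) d; rw [hd, mul_one] at h0; rw [hr]; exact h0
  have hdot2 : |∑ i, b i * d i| ≤ B := by
    have h0 := cs3 b d; rw [hd, mul_one] at h0; rw [hB]; exact h0
  set T : Fin 3 → ℝ := (τ ^ 2 / 4 * (sq3 b - sq3 a)) • d
      + (τ ^ 2 / 2 * ∑ i, (a - b) i * d i) • a
      + (τ ^ 2 / 2 * ∑ i, b i * d i) • (a - b)
      + τ • crossProduct d (a - b) with hT
  set Pb : Fin 3 → ℝ := (1 - τ ^ 2 / 4 * sq3 b) • d + (τ ^ 2 / 2 * ∑ i, b i * d i) • b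
      + τ • crossProduct d b with hPb
  clear_value T Pb
  have hsplit : Vmat τ a d - Vmat τ b d = α⁻¹ • T + (α⁻¹ - β⁻¹) • Pb := by
    rw [hT, hPb, hαdef, hβdef]
    funext k
    fin_cases k <;>
      (simp [Vmat, sq3, Fin.sum_univ_three, cross_apply, Matrix.vecHead, Matrix.vecTail,
        Pi.smul_apply, Pi.sub_apply, Pi.add_apply, smul_eq_mul, Function.comp]; ring)
  have habsq : |sq3 b - sq3 a| ≤ (A + B) * r := by
    rw [hsa, hsb, abs_le]; constructor <;> nlinarith
  -- bound on T
  have e1 : enorm3 ((τ ^ 2 / 4 * (sq3 b - sq3 a)) • d) ≤ τ ^ 2 / 4 * ((A + B) * r) := by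
    rw [enorm3_smul, hd, mul_one, abs_mul,
      abs_of_nonneg (show (0:ℝ) ≤ τ ^ 2 / 4 by positivity)]
    gcongr
  have e2 : enorm3 ((τ ^ 2 / 2 * ∑ i, (a - b) i * d i) • a) ≤ τ ^ 2 / 2 * r * A := by
    rw [enorm3_smul, abs_mul, abs_of_nonneg (show (0:ℝ) ≤ τ ^ 2 / 2 by positivity), ← hA]
    nlinarith [mul_le_mul_of_nonneg_left hdot1 (show (0:ℝ) ≤ τ ^ 2 / 2 * A by positivity)]
  have e3 : enorm3 ((τ ^ 2 / 2 * ∑ i, b i * d i) • (a - b)) ≤ τ ^ 2 / 2 * B * r := by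
    rw [enorm3_smul, abs_mul, abs_of_nonneg (show (0:ℝ) ≤ τ ^ 2 / 2 by positivity), ← hr]
    nlinarith [mul_le_mul_of_nonneg_left hdot2 (show (0:ℝ) ≤ τ ^ 2 / 2 * r by positivity)]
  have e4 : enorm3 (τ • crossProduct d (a - b)) ≤ τ * r := by
    rw [enorm3_smul, abs_of_nonneg hτ]
    have h0 := cross_le d (a - b)
    rw [hd, one_mul, ← hr] at h0
    exact mul_le_mul_of_nonneg_left h0 hτ
  have hTbound : enorm3 T ≤ τ * r * (1 + 3 * τ / 4 * (A + B)) := by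
    have h1 : enorm3 T ≤ enorm3 ((τ ^ 2 / 4 * (sq3 b - sq3 a)) • d)
        + enorm3 ((τ ^ 2 / 2 * ∑ i, (a - b) i * d i) • a)
        + enorm3 ((τ ^ 2 / 2 * ∑ i, b i * d i) • (a - b))
        + enorm3 (τ • crossProduct d (a - b)) := by
      rw [hT]; exact enorm3_add4_le _ _ _ _
    nlinarith [h1, e1, e2, e3, e4]
  -- bound on Pb
  have hτB : τ * B ≤ β := by
    rw [hβdef, hsb]; nlinarith [sq_nonneg (τ * B / 2 - 1)]
  have f1 : enorm3 ((1 - τ ^ 2 / 4 * sq3 b) • d) ≤ β := by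
    rw [enorm3_smul, hd, mul_one, hβdef, hsb, abs_le]
    constructor <;> nlinarith [sq_nonneg (τ * B)]
  have f2 : enorm3 ((τ ^ 2 / 2 * ∑ i, b i * d i) • b) ≤ 2 * β := by
    rw [enorm3_smul, abs_mul, abs_of_nonneg (show (0:ℝ) ≤ τ ^ 2 / 2 by positivity), ← hB,
      hβdef, hsb]
    nlinarith [mul_le_mul_of_nonneg_left hdot2 (show (0:ℝ) ≤ τ ^ 2 / 2 * B by positivity)]
  have f3 : enorm3 (τ • crossProduct d b) ≤ β := by
    rw [enorm3_smul, abs_of_nonneg hτ]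
    have h0 := cross_le d b
    rw [hd, one_mul, ← hB] at h0
    calc τ * enorm3 ((crossProduct d) b) ≤ τ * B := mul_le_mul_of_nonneg_left h0 hτ
      _ ≤ β := hτB
  have hPbound : enorm3 Pb ≤ 4 * β := by
    have h1 : enorm3 Pb ≤ enorm3 ((1 - τ ^ 2 / 4 * sq3 b) • d)
        + enorm3 ((τ ^ 2 / 2 * ∑ i, b i * d i) • b) + enorm3 (τ • crossProduct d b) := by
      rw [hPb]; exact enorm3_add3_le _ _ _
    linarith
  -- inverse difference
  have hinvdiff : |α⁻¹ - β⁻¹| ≤ τ ^ 2 / 4 * ((A + B) * r) * (α⁻¹ * β⁻¹) := by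
    have hid : α⁻¹ - β⁻¹ = (β - α) * (α⁻¹ * β⁻¹) := by
      field_simp
    rw [hid, abs_mul, abs_of_nonneg (show (0:ℝ) ≤ α⁻¹ * β⁻¹ by positivity)]
    have h1 : |β - α| ≤ τ ^ 2 / 4 * ((A + B) * r) := by
      have h2 : β - α = τ ^ 2 / 4 * (sq3 b - sq3 a) := by rw [hαdef, hβdef]; ring
      rw [h2, abs_mul, abs_of_nonneg (show (0:ℝ) ≤ τ ^ 2 / 4 by positivity)]
      gcongr
    gcongr
  -- combine
  rw [hsplit]
  have main : enorm3 (α⁻¹ • T + (α⁻¹ - β⁻¹) • Pb)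
      ≤ α⁻¹ * enorm3 T + |α⁻¹ - β⁻¹| * enorm3 Pb := by
    have h1 := enorm3_add_le (α⁻¹ • T) ((α⁻¹ - β⁻¹) • Pb)
    rw [enorm3_smul, enorm3_smul, abs_of_nonneg (le_of_lt (inv_pos.mpr hα0))] at h1
    exact h1
  have step2 : |α⁻¹ - β⁻¹| * enorm3 Pb ≤ τ ^ 2 * ((A + B) * r) * α⁻¹ := by
    calc |α⁻¹ - β⁻¹| * enorm3 Pb
        ≤ (τ ^ 2 / 4 * ((A + B) * r) * (α⁻¹ * β⁻¹)) * (4 * β) := by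
          apply mul_le_mul hinvdiff hPbound (enorm3_nonneg _) (by positivity)
      _ = τ ^ 2 * ((A + B) * r) * α⁻¹ * (β⁻¹ * β) := by ring
      _ = τ ^ 2 * ((A + B) * r) * α⁻¹ := by
          rw [inv_mul_cancel₀ (ne_of_gt hβ0), mul_one]
  have step3 : α⁻¹ * enorm3 T ≤ α⁻¹ * (τ * r * (1 + 3 * τ / 4 * (A + B))) := by
    apply mul_le_mul_of_nonneg_left hTbound (le_of_lt (inv_pos.mpr hα0))
  have final : α⁻¹ * (τ * r * (1 + 7 * τ / 4 * (A + B))) ≤ 9 / 2 * τ * r := by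
    have hkey : 1 + 7 * τ / 4 * (A + B) ≤ 9 / 2 * α := by
      rw [hαdef, hsa]
      nlinarith [sq_nonneg (τ * A - 14 / 9), mul_nonneg hτ hB0, mul_nonneg hτ hA0,
        mul_nonneg hτ (sub_nonneg.mpr hba)]
    calc α⁻¹ * (τ * r * (1 + 7 * τ / 4 * (A + B)))
        ≤ α⁻¹ * (τ * r * (9 / 2 * α)) := by
          apply mul_le_mul_of_nonneg_left _ (le_of_lt (inv_pos.mpr hα0))
          apply mul_le_mul_of_nonneg_left hkey (mul_nonneg hτ hr0)
      _ = 9 / 2 * τ * r * (α⁻¹ * α) := by ring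
      _ = 9 / 2 * τ * r := by rw [inv_mul_cancel₀ (ne_of_gt hα0), mul_one]
  calc enorm3 (α⁻¹ • T + (α⁻¹ - β⁻¹) • Pb) ≤ α⁻¹ * enorm3 T + |α⁻¹ - β⁻¹| * enorm3 Pb := main
    _ ≤ α⁻¹ * (τ * r * (1 + 3 * τ / 4 * (A + B))) + τ ^ 2 * ((A + B) * r) * α⁻¹ :=
        add_le_add step3 step2
    _ = α⁻¹ * (τ * r * (1 + 7 * τ / 4 * (A + B))) := by ring
    _ ≤ 9 / 2 * τ * r := final

lemma Vmat_lip (τ : ℝ) (hτ : 0 ≤ τ) (d a b : Fin 3 → ℝ) (hd : enorm3 d = 1) :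
    enorm3 (Vmat τ a d - Vmat τ b d) ≤ 9 / 2 * τ * enorm3 (a - b) := by
  rcases le_total (enorm3 b) (enorm3 a) with hc | hc
  · exact Vmat_lip_aux τ hτ d a b hd hc
  · have h0 := Vmat_lip_aux τ hτ d b a hd hc
    rw [enorm3_sub_comm (Vmat τ a d) (Vmat τ b d), enorm3_sub_comm a b]
    exact h0

lemma sq3_sub_le (x y : Fin 3 → ℝ) : sq3 (x - y) ≤ 2 * sq3 x + 2 * sq3 y := by
  simp only [sq3, Fin.sum_univ_three, Pi.sub_apply]
  nlinarith [sq_nonneg (x 0 + y 0), sq_nonneg (x 1 + y 1), sq_nonneg (x 2 + y 2)]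

/-- There is `C > 0` such that for every grid, every
`Δt > 0`, every unit-length grid function `d`, and all `w, w₁, w₂`,
`‖∇_h(V_{Δt}((w+w₁)/2) d) − ∇_h(V_{Δt}((w+w₂)/2) d)‖ ≤ (C Δt/h) ‖w₁ − w₂‖`. -/
theorem gradient_lipschitz_in_w :
    ∃ C > (0 : ℝ), ∀ (M : ℕ) [NeZero M], ∀ h Δt : ℝ, h = 1 / M → 0 < Δt →
      ∀ d w w₁ w₂ : (Fin 3 → ZMod M) → Fin 3 → ℝ, (∀ i, enorm3 (d i) = 1) →
        gradnorm h (fun i => Vmat Δt ((2 : ℝ)⁻¹ • (w i + w₁ i)) (d i)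
            - Vmat Δt ((2 : ℝ)⁻¹ • (w i + w₂ i)) (d i))
          ≤ C * Δt / h * l2norm h (w₁ - w₂) := by
  refine ⟨8, by norm_num, ?_⟩
  intro M _ h Δt hh hΔt d w w₁ w₂ hd
  have hM : 0 < (M : ℝ) := by
    exact_mod_cast Nat.pos_of_ne_zero (NeZero.ne M)
  have hh0 : 0 < h := by rw [hh]; positivity
  set u : (Fin 3 → ZMod M) → Fin 3 → ℝ := fun i =>
    Vmat Δt ((2 : ℝ)⁻¹ • (w i + w₁ i)) (d i) - Vmat Δt ((2 : ℝ)⁻¹ • (w i + w₂ i)) (d i)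
    with hu
  -- pointwise bound
  have hpt : ∀ i, sq3 (u i) ≤ 81 / 16 * Δt ^ 2 * sq3 (w₁ i - w₂ i) := by
    intro i
    have hlip := Vmat_lip Δt (le_of_lt hΔt) (d i)
      ((2 : ℝ)⁻¹ • (w i + w₁ i)) ((2 : ℝ)⁻¹ • (w i + w₂ i)) (hd i)
    have harg : (2 : ℝ)⁻¹ • (w i + w₁ i) - (2 : ℝ)⁻¹ • (w i + w₂ i)
        = (2 : ℝ)⁻¹ • (w₁ i - w₂ i) := by
      funext k
      simp [Pi.smul_apply, Pi.sub_apply, Pi.add_apply, smul_eq_mul]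
      ring
    rw [harg, enorm3_smul] at hlip
    have h2 : |(2 : ℝ)⁻¹| = 2⁻¹ := by norm_num
    rw [h2] at hlip
    have hb : enorm3 (u i) ≤ 9 / 4 * Δt * enorm3 (w₁ i - w₂ i) := by
      rw [hu]
      calc enorm3 _ ≤ 9 / 2 * Δt * (2⁻¹ * enorm3 (w₁ i - w₂ i)) := hlip
        _ = 9 / 4 * Δt * enorm3 (w₁ i - w₂ i) := by ring
    have h3 := sq_enorm3 (u i)
    have h4 := sq_enorm3 (w₁ i - w₂ i)
    nlinarith [enorm3_nonneg (u i), enorm3_nonneg (w₁ i - w₂ i), hb, mul_pos hΔt hΔt]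
  -- sum manipulations
  set Sw : ℝ := ∑ i, sq3 (w₁ i - w₂ i) with hSw
  have hSw0 : 0 ≤ Sw := Finset.sum_nonneg fun i _ => sq3_nonneg _
  have hSu0 : ∀ i, (0:ℝ) ≤ sq3 (u i) := fun i => sq3_nonneg _
  have hsumu : (∑ i, sq3 (u i)) ≤ 81 / 16 * Δt ^ 2 * Sw := by
    rw [hSw, Finset.mul_sum]
    exact Finset.sum_le_sum fun i _ => hpt i
  have hshift : ∀ j : Fin 3, (∑ i, sq3 (u (i - Pi.single j 1))) = ∑ i, sq3 (u i) :=
    fun j => Fintype.sum_equiv (Equiv.subRight (Pi.single j 1)) _ _ (fun i => rfl)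
  have hDmsum : ∀ (j : Fin 3) (i : Fin 3 → ZMod M),
      (∑ k, Dm h u j i k ^ 2) = h⁻¹ ^ 2 * sq3 (u i - u (i - Pi.single j 1)) := by
    intro j i
    simp only [Dm, sq3, Fin.sum_univ_three, Pi.smul_apply, Pi.sub_apply, smul_eq_mul]
    ring
  have hS : (∑ i, ∑ j : Fin 3, ∑ k, Dm h u j i k ^ 2)
      ≤ h⁻¹ ^ 2 * (12 * (∑ i, sq3 (u i))) := by
    have step1 : ∀ i, (∑ j : Fin 3, ∑ k, Dm h u j i k ^ 2)
        = ∑ j : Fin 3, h⁻¹ ^ 2 * sq3 (u i - u (i - Pi.single j 1)) := by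
      intro i; exact Finset.sum_congr rfl fun j _ => hDmsum j i
    calc (∑ i, ∑ j : Fin 3, ∑ k, Dm h u j i k ^ 2)
        = ∑ i, ∑ j : Fin 3, h⁻¹ ^ 2 * sq3 (u i - u (i - Pi.single j 1)) := by
          exact Finset.sum_congr rfl fun i _ => step1 i
      _ ≤ ∑ i, ∑ j : Fin 3, h⁻¹ ^ 2 * (2 * sq3 (u i) + 2 * sq3 (u (i - Pi.single j 1))) := by
          apply Finset.sum_le_sum; intro i _
          apply Finset.sum_le_sum; intro j _
          exact mul_le_mul_of_nonneg_left (sq3_sub_le _ _) (by positivity)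
      _ = h⁻¹ ^ 2 * ∑ j : Fin 3, ∑ i, (2 * sq3 (u i) + 2 * sq3 (u (i - Pi.single j 1))) := by
          rw [Finset.sum_comm, Finset.mul_sum]
          exact Finset.sum_congr rfl fun j _ => by rw [Finset.mul_sum]
      _ = h⁻¹ ^ 2 * ∑ j : Fin 3, (2 * (∑ i, sq3 (u i)) + 2 * (∑ i, sq3 (u i))) := by
          congr 1
          refine Finset.sum_congr rfl fun j _ => ?_
          rw [Finset.sum_add_distrib, ← Finset.mul_sum, ← Finset.mul_sum, hshift j]
      _ = h⁻¹ ^ 2 * (12 * (∑ i, sq3 (u i))) := by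
          congr 1
          rw [Fin.sum_univ_three]
          ring
  -- assemble
  have hl2 : l2norm h (w₁ - w₂) = Real.sqrt (h ^ 3 * Sw) := by
    rw [hSw]; rfl
  have hl2sq : h ^ 3 * Sw = (l2norm h (w₁ - w₂)) ^ 2 := by
    rw [hl2, Real.sq_sqrt (by positivity)]
  have hrhs0 : 0 ≤ 8 * Δt / h * l2norm h (w₁ - w₂) := by
    have := Real.sqrt_nonneg (h ^ 3 * ∑ i, ∑ k, (w₁ - w₂) i k ^ 2)
    unfold l2norm; positivity
  have hfinal : h ^ 3 * (∑ i, ∑ j : Fin 3, ∑ k, Dm h u j i k ^ 2)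
      ≤ (8 * Δt / h * l2norm h (w₁ - w₂)) ^ 2 := by
    have hexp : (8 * Δt / h * l2norm h (w₁ - w₂)) ^ 2 = 64 * Δt ^ 2 * h⁻¹ ^ 2 * (h ^ 3 * Sw) := by
      rw [hl2, mul_pow, Real.sq_sqrt (show (0:ℝ) ≤ h ^ 3 * Sw by positivity)]
      ring
    rw [hexp]
    have c1 : h ^ 3 * (∑ i, ∑ j : Fin 3, ∑ k, Dm h u j i k ^ 2)
        ≤ h ^ 3 * (h⁻¹ ^ 2 * (12 * (∑ i, sq3 (u i)))) :=
      mul_le_mul_of_nonneg_left hS (by positivity)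
    have c2 : (∑ i, sq3 (u i)) ≤ 81 / 16 * Δt ^ 2 * Sw := hsumu
    have hpos : (0:ℝ) ≤ h ^ 3 * h⁻¹ ^ 2 := by positivity
    nlinarith [mul_le_mul_of_nonneg_left c2 hpos, sq_nonneg Δt,
      mul_nonneg (mul_nonneg (sq_nonneg Δt) hpos) hSw0]
  calc gradnorm h u = Real.sqrt (h ^ 3 * (∑ i, ∑ j : Fin 3, ∑ k, Dm h u j i k ^ 2)) := rfl
    _ ≤ Real.sqrt ((8 * Δt / h * l2norm h (w₁ - w₂)) ^ 2) := Real.sqrt_le_sqrt hfinal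
    _ = 8 * Δt / h * l2norm h (w₁ - w₂) := Real.sqrt_sq hrhs0
end
end
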